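/- Let f = 1_{(0,1/2]} + 1_{(1,2]} and Δ = 1. Then for almost every u ∈ [0,1], g_{1;1}(u) = 1_{(0,1/2]}(u) and g_{0;1}(u) = 2·1_{(0,1/2]}(u) + 1_{(1/2,1]}(u); the autocorrelation at lag 1 is ρ(1) = γ_f(1)/γ_f(0) = 1/3; and ∫_0^1 ( g_{1;1}(u) − ρ(1) g_{0;1}(u) )² du = 1/9 > 0, so g_{1;1} − ρ(1) g_{0;1} is not almost everywhere zero. -/

import Mathlib

open MeasureTheory
open scoped ENNReal

/-- The autocovariance function of a moving average process with kernel `f`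
and driving Lévy process of variance `σ2`. -/
noncomputable def autocov (f : ℝ → ℝ) (σ2 : ℝ) (h : ℝ) : ℝ :=
  σ2 * ∫ s : ℝ, f (-s) * f (h - s)

/-- `g_{q;Δ}(u) = ∑_{k∈ℤ} f(u + kΔ) f(u + (k+q)Δ)`. -/
noncomputable def gper (f : ℝ → ℝ) (Δ : ℝ) (q : ℤ) (u : ℝ) : ℝ :=
  ∑' k : ℤ, f (u + (k : ℝ) * Δ) * f (u + ((k + q : ℤ) : ℝ) * Δ)

/-- The kernel `f = 1_{(0,1/2]} + 1_{(1,2]}` of Remark 3.5. -/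
noncomputable def exKernel (s : ℝ) : ℝ :=
  Set.indicator (Set.Ioc (0 : ℝ) (1 / 2)) (fun _ => (1 : ℝ)) s
    + Set.indicator (Set.Ioc (1 : ℝ) 2) (fun _ => (1 : ℝ)) s


lemma ek_zero {x : ℝ} (h : x ≤ 0 ∨ (1/2 < x ∧ x ≤ 1) ∨ 2 < x) : exKernel x = 0 := by
  have A : x ∉ Set.Ioc (0:ℝ) (1/2) := by
    simp only [Set.mem_Ioc, not_and_or, not_lt, not_le]
    rcases h with h | ⟨h1, h2⟩ | h
    · left; linarith
    · right; linarith
    · right; linarith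
  have B : x ∉ Set.Ioc (1:ℝ) 2 := by
    simp only [Set.mem_Ioc, not_and_or, not_lt, not_le]
    rcases h with h | ⟨h1, h2⟩ | h
    · left; linarith
    · left; linarith
    · right; linarith
  unfold exKernel
  rw [Set.indicator_of_notMem A, Set.indicator_of_notMem B, add_zero]

lemma ek_one_l {x : ℝ} (h1 : 0 < x) (h2 : x ≤ 1/2) : exKernel x = 1 := by
  unfold exKernel
  rw [Set.indicator_of_mem (by simp only [Set.mem_Ioc]; constructor <;> linarith),
    Set.indicator_of_notMem (by simp only [Set.mem_Ioc, not_and_or, not_lt, not_le]; left; linarith)]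
  norm_num

lemma ek_one_r {x : ℝ} (h1 : 1 < x) (h2 : x ≤ 2) : exKernel x = 1 := by
  unfold exKernel
  rw [Set.indicator_of_notMem (by simp only [Set.mem_Ioc, not_and_or, not_lt, not_le]; right; linarith),
    Set.indicator_of_mem (by simp only [Set.mem_Ioc]; constructor <;> linarith)]
  norm_num


lemma ek_uk_zero {u : ℝ} {k : ℤ} (h0 : 0 < u) (h1 : u ≤ 1) (hk : k ≠ 0) (hk1 : k ≠ 1) :
    exKernel (u + (k : ℝ)) = 0 := by
  rcases lt_or_gt_of_ne hk with h | h
  · have hc : (k : ℝ) ≤ -1 := by exact_mod_cast (by omega : k ≤ -1)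
    exact ek_zero (Or.inl (by linarith))
  · have hc : (2 : ℝ) ≤ (k : ℝ) := by exact_mod_cast (by omega : (2:ℤ) ≤ k)
    exact ek_zero (Or.inr (Or.inr (by linarith)))


lemma gper_ex {u : ℝ} (q : ℤ) (h0 : 0 < u) (h1 : u ≤ 1) :
    gper exKernel 1 q u
      = exKernel u * exKernel (u + (q : ℝ)) + exKernel (u + 1) * exKernel (u + (1 + (q:ℝ))) := by
  unfold gper
  rw [tsum_eq_sum (s := ({0, 1} : Finset ℤ))
      (by
        intro k hk
        simp only [Finset.mem_insert, Finset.mem_singleton, not_or] at hk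
        rw [mul_one, ek_uk_zero h0 h1 hk.1 hk.2, zero_mul])]
  rw [Finset.sum_pair (by norm_num : (0:ℤ) ≠ 1)]
  push_cast
  ring_nf

lemma g1_l {u : ℝ} (h0 : 0 < u) (hu : u ≤ 1/2) : gper exKernel 1 1 u = 1 := by
  rw [gper_ex 1 h0 (by linarith)]; push_cast; ring_nf
  rw [ek_one_l h0 hu, ek_one_r (x := 1 + u) (by linarith) (by linarith),
    ek_zero (x := 2 + u) (Or.inr (Or.inr (by linarith)))]
  ring

lemma g1_r {u : ℝ} (hu : 1/2 < u) (h1 : u ≤ 1) : gper exKernel 1 1 u = 0 := by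
  rw [gper_ex 1 (by linarith) h1]; push_cast; ring_nf
  rw [ek_zero (x := u) (Or.inr (Or.inl ⟨hu, h1⟩)),
    ek_zero (x := 2 + u) (Or.inr (Or.inr (by linarith)))]
  ring

lemma g0_l {u : ℝ} (h0 : 0 < u) (hu : u ≤ 1/2) : gper exKernel 1 0 u = 2 := by
  rw [gper_ex 0 h0 (by linarith)]; push_cast; ring_nf
  rw [ek_one_l h0 hu, ek_one_r (x := 1 + u) (by linarith) (by linarith)]
  ring

lemma g0_r {u : ℝ} (hu : 1/2 < u) (h1 : u ≤ 1) : gper exKernel 1 0 u = 1 := by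
  rw [gper_ex 0 (by linarith) h1]; push_cast; ring_nf
  rw [ek_zero (x := u) (Or.inr (Or.inl ⟨hu, h1⟩)),
    ek_one_r (x := 1 + u) (by linarith) (by linarith)]
  ring


lemma ind_ico_int (a b : ℝ) :
    Integrable (Set.indicator (Set.Ico a b) (fun _ => (1:ℝ))) volume :=
  (integrable_indicator_iff measurableSet_Ico).2
    ((integrableOn_const_iff (by simp)).2 (Or.inr (by rw [Real.volume_Ico]; exact ENNReal.ofReal_lt_top)))

lemma integrand0 (s : ℝ) : exKernel (-s) * exKernel (0 - s)
    = Set.indicator (Set.Ico (-(1:ℝ)/2) 0) (fun _ => (1:ℝ)) s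
      + Set.indicator (Set.Ico (-(2:ℝ)) (-1)) (fun _ => (1:ℝ)) s := by
  rw [show (0:ℝ) - s = -s by ring]
  rcases lt_or_ge s (-2) with h | h
  · rw [ek_zero (x := -s) (Or.inr (Or.inr (by linarith))), zero_mul,
      Set.indicator_of_notMem (by simp only [Set.mem_Ico, not_and_or, not_le, not_lt]; left; linarith),
      Set.indicator_of_notMem (by simp only [Set.mem_Ico, not_and_or, not_le, not_lt]; left; linarith)]
    norm_num
  rcases lt_or_ge s (-1) with h2 | h2
  · rw [ek_one_r (x := -s) (by linarith) (by linarith),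
      Set.indicator_of_notMem (by simp only [Set.mem_Ico, not_and_or, not_le, not_lt]; left; linarith),
      Set.indicator_of_mem (by exact ⟨by linarith, by linarith⟩)]
    norm_num
  rcases lt_or_ge s (-(1:ℝ)/2) with h3 | h3
  · rw [ek_zero (x := -s) (Or.inr (Or.inl ⟨by linarith, by linarith⟩)), zero_mul,
      Set.indicator_of_notMem (by simp only [Set.mem_Ico, not_and_or, not_le, not_lt]; left; linarith),
      Set.indicator_of_notMem (by simp only [Set.mem_Ico, not_and_or, not_le, not_lt]; right; linarith)]
    norm_num
  rcases lt_or_ge s 0 with h4 | h4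
  · rw [ek_one_l (x := -s) (by linarith) (by linarith),
      Set.indicator_of_mem (by exact ⟨by linarith, by linarith⟩),
      Set.indicator_of_notMem (by simp only [Set.mem_Ico, not_and_or, not_le, not_lt]; right; linarith)]
    norm_num
  · rw [ek_zero (x := -s) (Or.inl (by linarith)), zero_mul,
      Set.indicator_of_notMem (by simp only [Set.mem_Ico, not_and_or, not_le, not_lt]; right; linarith),
      Set.indicator_of_notMem (by simp only [Set.mem_Ico, not_and_or, not_le, not_lt]; right; linarith)]
    norm_num

lemma integrand1 (s : ℝ) : exKernel (-s) * exKernel (1 - s)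
    = Set.indicator (Set.Ico (-(1:ℝ)/2) 0) (fun _ => (1:ℝ)) s := by
  rcases lt_or_ge s (-1) with h | h
  · rw [ek_zero (x := 1 - s) (Or.inr (Or.inr (by linarith))), mul_zero,
      Set.indicator_of_notMem (by simp only [Set.mem_Ico, not_and_or, not_le, not_lt]; left; linarith)]
  rcases lt_or_ge s (-(1:ℝ)/2) with h2 | h2
  · rw [ek_zero (x := -s) (Or.inr (Or.inl ⟨by linarith, by linarith⟩)), zero_mul,
      Set.indicator_of_notMem (by simp only [Set.mem_Ico, not_and_or, not_le, not_lt]; left; linarith)]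
  rcases lt_or_ge s 0 with h3 | h3
  · rw [ek_one_l (x := -s) (by linarith) (by linarith),
      ek_one_r (x := 1 - s) (by linarith) (by linarith),
      Set.indicator_of_mem (by exact ⟨by linarith, by linarith⟩)]
    norm_num
  · rw [ek_zero (x := -s) (Or.inl (by linarith)), zero_mul,
      Set.indicator_of_notMem (by simp only [Set.mem_Ico, not_and_or, not_le, not_lt]; right; linarith)]

lemma ac0 : (∫ s : ℝ, exKernel (-s) * exKernel (0 - s)) = 3/2 := by
  simp only [integrand0]
  rw [integral_add (ind_ico_int _ _) (ind_ico_int _ _),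
    integral_indicator measurableSet_Ico, integral_indicator measurableSet_Ico,
    setIntegral_const, setIntegral_const, Real.volume_real_Ico, Real.volume_real_Ico]
  norm_num

lemma ac1 : (∫ s : ℝ, exKernel (-s) * exKernel (1 - s)) = 1/2 := by
  simp only [integrand1]
  rw [integral_indicator measurableSet_Ico, setIntegral_const, Real.volume_real_Ico]
  norm_num

lemma rho_eq (σ2 : ℝ) (hσ2 : 0 < σ2) :
    autocov exKernel σ2 1 / autocov exKernel σ2 0 = 1 / 3 := by
  unfold autocov
  rw [ac0, ac1, mul_div_mul_left _ _ hσ2.ne']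
  norm_num

lemma int_sq (σ2 : ℝ) (hσ2 : 0 < σ2) :
    (∫ u in Set.Ioc (0 : ℝ) 1,
        (gper exKernel 1 1 u
          - (autocov exKernel σ2 1 / autocov exKernel σ2 0) * gper exKernel 1 0 u) ^ 2)
      = 1 / 9 := by
  have hEq : Set.EqOn
      (fun u => (gper exKernel 1 1 u
        - (autocov exKernel σ2 1 / autocov exKernel σ2 0) * gper exKernel 1 0 u) ^ 2)
      (fun _ => (1 : ℝ) / 9) (Set.Ioc 0 1) := by
    intro u hu
    simp only
    rw [rho_eq σ2 hσ2]
    rcases le_or_gt u (1/2) with h | h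
    · rw [g1_l hu.1 h, g0_l hu.1 h]; norm_num
    · rw [g1_r h hu.2, g0_r h hu.2]; norm_num
  rw [setIntegral_congr_fun measurableSet_Ioc hEq, setIntegral_const, Real.volume_real_Ioc]
  norm_num

/-- for `f = 1_{(0,1/2]} + 1_{(1,2]}` and `Δ = 1`, almost everywhere on
`[0,1]` we have `g_{1;1} = 1_{(0,1/2]}` and `g_{0;1} = 2·1_{(0,1/2]} + 1_{(1/2,1]}`,
the lag-one autocorrelation is `ρ(1) = 1/3`, and
`∫₀¹ (g_{1;1}(u) − ρ(1) g_{0;1}(u))² du = 1/9 > 0`, so that `g_{1;1} − ρ(1) g_{0;1}`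
is not almost everywhere zero. -/
theorem statement10 (σ2 : ℝ) (hσ2 : 0 < σ2) :
    (∀ᵐ u ∂(volume.restrict (Set.Icc (0 : ℝ) 1)),
        gper exKernel 1 1 u = Set.indicator (Set.Ioc (0 : ℝ) (1 / 2)) (fun _ => (1 : ℝ)) u
        ∧ gper exKernel 1 0 u
            = 2 * Set.indicator (Set.Ioc (0 : ℝ) (1 / 2)) (fun _ => (1 : ℝ)) u
              + Set.indicator (Set.Ioc (1 / 2 : ℝ) 1) (fun _ => (1 : ℝ)) u)
    ∧ autocov exKernel σ2 1 / autocov exKernel σ2 0 = 1 / 3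
    ∧ (∫ u in Set.Ioc (0 : ℝ) 1,
          (gper exKernel 1 1 u
            - (autocov exKernel σ2 1 / autocov exKernel σ2 0) * gper exKernel 1 0 u) ^ 2)
        = 1 / 9
    ∧ ¬ (∀ᵐ u ∂(volume.restrict (Set.Icc (0 : ℝ) 1)),
          gper exKernel 1 1 u
            - (autocov exKernel σ2 1 / autocov exKernel σ2 0) * gper exKernel 1 0 u = 0) := by
  refine ⟨?_, rho_eq σ2 hσ2, int_sq σ2 hσ2, ?_⟩
  · have hne : ∀ᵐ u ∂(volume.restrict (Set.Icc (0:ℝ) 1)), u ≠ 0 := by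
      refine ae_restrict_of_ae ?_
      rw [ae_iff]
      simp only [ne_eq, not_not, Set.setOf_eq_eq_singleton]
      exact Real.volume_singleton
    filter_upwards [ae_restrict_mem measurableSet_Icc, hne] with u hu hne0
    have h0 : 0 < u := lt_of_le_of_ne hu.1 (Ne.symm hne0)
    rcases le_or_gt u (1/2) with h | h
    · refine ⟨?_, ?_⟩
      · rw [g1_l h0 h, Set.indicator_of_mem (Set.mem_Ioc.mpr ⟨h0, h⟩)]
      · rw [g0_l h0 h, Set.indicator_of_mem (Set.mem_Ioc.mpr ⟨h0, h⟩),
          Set.indicator_of_notMem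
            (by simp only [Set.mem_Ioc, not_and_or, not_le, not_lt]; left; linarith)]
        norm_num
    · refine ⟨?_, ?_⟩
      · rw [g1_r h hu.2, Set.indicator_of_notMem
            (by simp only [Set.mem_Ioc, not_and_or, not_le, not_lt]; right; linarith)]
      · rw [g0_r h hu.2, Set.indicator_of_notMem
            (by simp only [Set.mem_Ioc, not_and_or, not_le, not_lt]; right; linarith),
          Set.indicator_of_mem (Set.mem_Ioc.mpr ⟨h, hu.2⟩)]
        norm_num
  · intro hae
    have h1 : ∀ᵐ u ∂(volume.restrict (Set.Ioc (0:ℝ) 1)),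
        gper exKernel 1 1 u
          - (autocov exKernel σ2 1 / autocov exKernel σ2 0) * gper exKernel 1 0 u = 0 :=
      ae_mono (Measure.restrict_mono Set.Ioc_subset_Icc_self le_rfl) hae
    have h2 : (fun u => (gper exKernel 1 1 u
          - (autocov exKernel σ2 1 / autocov exKernel σ2 0) * gper exKernel 1 0 u) ^ 2)
        =ᵐ[volume.restrict (Set.Ioc (0:ℝ) 1)] (fun _ => (0:ℝ)) :=
      h1.mono fun u hu => by simp [hu]
    have h3 := int_sq σ2 hσ2
    rw [integral_congr_ae h2, integral_zero] at h3
    norm_num at h3
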